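/- Sup bound for magnetic Schrödinger operators with unit mass (a priori estimate behind Lemmas 3 and 6 of the paper): let λ₁,…,λₙ > 0, let A : ℝⁿ → ℝⁿ be C¹, let φ : ℝⁿ → ℂ be a bounded C² function, and let h : ℝⁿ → ℂ be bounded. If −Σⱼ λⱼ² (∂ⱼ − iAⱼ)((∂ⱼ − iAⱼ)φ)(x) + φ(x) = h(x) for every x ∈ ℝⁿ, then sup_{ℝⁿ} |φ| ≤ sup_{ℝⁿ} |h|. -/

import Mathlib

open Complex Filter

noncomputable section

/-- Partial derivative in the `j`-th coordinate direction. -/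
def pd {n : ℕ} {E : Type*} [NormedAddCommGroup E] [NormedSpace ℝ E]
    (j : Fin n) (f : (Fin n → ℝ) → E) (x : Fin n → ℝ) : E :=
  fderiv ℝ f x (Pi.single j 1)

/-- Covariant partial derivative `(∂ⱼ − iAⱼ)φ = ∂ⱼφ − iAⱼφ`. -/
def covD {n : ℕ} (j : Fin n) (A : (Fin n → ℝ) → Fin n → ℝ)
    (u : (Fin n → ℝ) → ℂ) (x : Fin n → ℝ) : ℂ :=
  pd j u x - Complex.I * (A x j : ℂ) * u x

section Aux

variable {n : ℕ} {E F : Type*} [NormedAddCommGroup E] [NormedSpace ℝ E]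
  [NormedAddCommGroup F] [NormedSpace ℝ F]

lemma pd_clm (L : E →L[ℝ] F) {f : (Fin n → ℝ) → E} {x : Fin n → ℝ}
    (hf : DifferentiableAt ℝ f x) (j : Fin n) :
    pd j (fun y => L (f y)) x = L (pd j f x) := by
  unfold pd
  rw [show (fun y => L (f y)) = (L ∘ f) from rfl, (L.hasFDerivAt.comp x hf.hasFDerivAt).fderiv]
  rfl

lemma pd_sub {f g : (Fin n → ℝ) → E} {x : Fin n → ℝ}
    (hf : DifferentiableAt ℝ f x) (hg : DifferentiableAt ℝ g x) (j : Fin n) :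
    pd j (fun y => f y - g y) x = pd j f x - pd j g x := by
  unfold pd; rw [fderiv_fun_sub hf hg]; rfl

lemma pd_mul {f g : (Fin n → ℝ) → ℂ} {x : Fin n → ℝ}
    (hf : DifferentiableAt ℝ f x) (hg : DifferentiableAt ℝ g x) (j : Fin n) :
    pd j (fun y => f y * g y) x = pd j f x * g x + f x * pd j g x := by
  unfold pd; rw [fderiv_fun_mul hf hg]; simp [mul_comm]
  ring

lemma pd_mul_real {f g : (Fin n → ℝ) → ℝ} {x : Fin n → ℝ}
    (hf : DifferentiableAt ℝ f x) (hg : DifferentiableAt ℝ g x) (j : Fin n) :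
    pd j (fun y => f y * g y) x = pd j f x * g x + f x * pd j g x := by
  unfold pd; rw [fderiv_fun_mul hf hg]; simp [mul_comm]
  ring

lemma pd_const_mul {f : (Fin n → ℝ) → ℂ} {x : Fin n → ℝ}
    (hf : DifferentiableAt ℝ f x) (c : ℂ) (j : Fin n) :
    pd j (fun y => c * f y) x = c * pd j f x := by
  unfold pd; rw [fderiv_const_mul hf]; rfl

lemma pd_smul_real {f : (Fin n → ℝ) → ℝ} {x : Fin n → ℝ}
    (hf : DifferentiableAt ℝ f x) (c : ℝ) (j : Fin n) :
    pd j (fun y => c * f y) x = c * pd j f x := by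
  unfold pd; rw [fderiv_const_mul hf]; rfl

lemma pd_re {f : (Fin n → ℝ) → ℂ} {x : Fin n → ℝ}
    (hf : DifferentiableAt ℝ f x) (j : Fin n) :
    pd j (fun y => (f y).re) x = (pd j f x).re :=
  pd_clm Complex.reCLM hf j

lemma pd_conj {f : (Fin n → ℝ) → ℂ} {x : Fin n → ℝ}
    (hf : DifferentiableAt ℝ f x) (j : Fin n) :
    pd j (fun y => (starRingEnd ℂ) (f y)) x = (starRingEnd ℂ) (pd j f x) :=
  pd_clm Complex.conjCLE.toContinuousLinearMap hf j

lemma pd_ofReal {f : (Fin n → ℝ) → ℝ} {x : Fin n → ℝ}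
    (hf : DifferentiableAt ℝ f x) (j : Fin n) :
    pd j (fun y => ((f y : ℝ) : ℂ)) x = ((pd j f x : ℝ) : ℂ) :=
  pd_clm Complex.ofRealCLM hf j

lemma pd_proj (k : Fin n) (x : Fin n → ℝ) (j : Fin n) :
    pd j (fun y : Fin n → ℝ => y k) x = (Pi.single j (1:ℝ) : Fin n → ℝ) k := by
  unfold pd
  have : (fun y : Fin n → ℝ => y k)
      = (ContinuousLinearMap.proj (R := ℝ) (φ := fun _ : Fin n => ℝ) k) := rfl
  rw [this, ContinuousLinearMap.fderiv]
  rfl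

lemma pd_const (c : E) (x : Fin n → ℝ) (j : Fin n) :
    pd j (fun _ : Fin n → ℝ => c) x = 0 := by
  unfold pd
  rw [fderiv_fun_const]
  rfl

lemma pd_sum {ι : Type*} (s : Finset ι) {f : ι → (Fin n → ℝ) → E} {x : Fin n → ℝ}
    (hf : ∀ i ∈ s, DifferentiableAt ℝ (f i) x) (j : Fin n) :
    pd j (fun y => ∑ i ∈ s, f i y) x = ∑ i ∈ s, pd j (f i) x := by
  unfold pd; rw [fderiv_fun_sum hf]
  exact ContinuousLinearMap.sum_apply _ _ _

lemma contDiff_pd {f : (Fin n → ℝ) → E} (hf : ContDiff ℝ 2 f) (j : Fin n) :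
    ContDiff ℝ 1 (pd j f) := by
  have h1 : ContDiff ℝ 1 (fderiv ℝ f) := hf.fderiv_right (by norm_num)
  exact (ContinuousLinearMap.apply ℝ E (Pi.single j (1:ℝ))).contDiff.comp h1

lemma deriv2_nonpos_of_localmax {g : ℝ → ℝ} (hg : ContDiff ℝ 2 g)
    (hmax : IsLocalMax g 0) : deriv (deriv g) 0 ≤ 0 := by
  by_contra hpos
  push_neg at hpos
  have hg2 : ContDiff ℝ 1 (deriv g) := by
    have := (contDiff_succ_iff_deriv (n := 1)).mp (by exact_mod_cast hg)
    exact this.2.2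
  have hcont : Continuous (deriv (deriv g)) := by
    have := (contDiff_succ_iff_deriv (n := 0)).mp (by exact_mod_cast hg2)
    exact this.2.2.continuous
  have hev : ∀ᶠ t in nhds (0:ℝ), 0 < deriv (deriv g) t :=
    (hcont.continuousAt (x := (0:ℝ))).eventually (p := fun s => 0 < s)
      (Filter.Tendsto.eventually_const_lt hpos tendsto_id) |>.mono (fun t h => h)
  have hev2 := hev.and hmax
  rcases Metric.eventually_nhds_iff_ball.mp hev2 with ⟨r, hr, hball⟩
  have hconv : StrictConvexOn ℝ (Metric.ball (0:ℝ) r) g := by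
    apply strictConvexOn_of_deriv2_pos (convex_ball 0 r)
      (hg.continuous.continuousOn)
    intro t ht
    rw [interior_eq_iff_isOpen.mpr Metric.isOpen_ball] at ht
    show 0 < deriv^[2] g t
    rw [Function.iterate_succ, Function.iterate_one]
    exact (hball t ht).1
  have ha : (-(r/2)) ∈ Metric.ball (0:ℝ) r := by
    simp only [Metric.mem_ball, dist_zero_right, Real.norm_eq_abs]
    rw [abs_neg, _root_.abs_of_pos (by linarith)]; linarith
  have hb : (r/2) ∈ Metric.ball (0:ℝ) r := by
    simp only [Metric.mem_ball, dist_zero_right, Real.norm_eq_abs]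
    rw [_root_.abs_of_pos (by linarith)]; linarith
  have hne : (-(r/2)) ≠ (r/2) := by linarith
  have := hconv.2 ha hb hne (by norm_num : (0:ℝ) < 1/2) (by norm_num : (0:ℝ) < 1/2) (by norm_num)
  have h0 : (1/2 : ℝ) • (-(r/2)) + (1/2 : ℝ) • (r/2) = 0 := by simp [smul_eq_mul]
  rw [h0] at this
  have hga := (hball _ ha).2
  have hgb := (hball _ hb).2
  simp only [smul_eq_mul] at this
  have : g 0 < g 0 := lt_of_lt_of_le this (by nlinarith [hga, hgb])
  exact lt_irrefl _ this

lemma pd2_nonpos_of_localmax {f : (Fin n → ℝ) → ℝ} (hf : ContDiff ℝ 2 f)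
    {x : Fin n → ℝ} (hmax : IsLocalMax f x) (j : Fin n) :
    pd j (pd j f) x ≤ 0 := by
  set e : Fin n → ℝ := Pi.single j 1 with he
  set ℓ : ℝ → (Fin n → ℝ) := fun t => x + t • e with hℓdef
  have hℓ : ContDiff ℝ 2 ℓ := contDiff_const.add (contDiff_id.smul contDiff_const)
  have hℓd : ∀ t : ℝ, HasDerivAt ℓ e t := by
    intro t
    have := ((hasDerivAt_id t).smul_const e).const_add x
    simpa [hℓdef] using this
  have hℓ0 : ℓ 0 = x := by simp [hℓdef]
  set g : ℝ → ℝ := f ∘ ℓ with hgdef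
  have hg : ContDiff ℝ 2 g := hf.comp hℓ
  have hderiv : deriv g = fun t => pd j f (ℓ t) := by
    funext t
    exact (((hf.differentiable (by norm_num)) (ℓ t)).hasFDerivAt.comp_hasDerivAt t (hℓd t)).deriv
  have h2 : deriv (deriv g) 0 = pd j (pd j f) x := by
    rw [hderiv]
    have := (((contDiff_pd hf j).differentiable one_ne_zero (ℓ 0)).hasFDerivAt.comp_hasDerivAt 0
      (hℓd 0)).deriv
    rw [show ((pd j f) ∘ ℓ) = fun t => pd j f (ℓ t) from rfl] at this
    rw [this, hℓ0]
    rfl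
  have hmaxg : IsLocalMax g 0 := by
    have ht : Filter.Tendsto ℓ (nhds 0) (nhds x) := by
      rw [← hℓ0]
      exact (hℓ.continuous.continuousAt)
    have hmax' : IsMaxFilter f (nhds x) (ℓ 0) := by rwa [hℓ0]
    exact hmax'.comp_tendsto ht
  rw [← h2]
  exact deriv2_nonpos_of_localmax hg hmaxg

lemma key_alg (a b c : ℂ) (α β : ℝ) :
    ((starRingEnd ℂ) a * (c - I*(β:ℂ)*a - 2*I*(α:ℂ)*b - (α:ℂ)^2*a)).re ≤
      Complex.normSq b + ((starRingEnd ℂ) a * c).re := by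
  have h := sq_nonneg (b.re + α*a.im)
  have h2 := sq_nonneg (b.im - α*a.re)
  simp only [Complex.mul_re, Complex.mul_im, Complex.sub_re, Complex.sub_im,
    Complex.conj_re, Complex.conj_im, Complex.normSq_apply, Complex.I_re, Complex.I_im,
    Complex.ofReal_re, Complex.ofReal_im, Complex.re_ofNat, Complex.im_ofNat,
    ← Complex.ofReal_pow] at *
  nlinarith [h, h2]

end Aux

set_option maxHeartbeats 2000000 in
theorem statement12 {n : ℕ} (lam : Fin n → ℝ) (hlam : ∀ j, 0 < lam j)
    (A : (Fin n → ℝ) → Fin n → ℝ) (hA : ContDiff ℝ 1 A)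
    (φ h : (Fin n → ℝ) → ℂ) (hφ : ContDiff ℝ 2 φ)
    (hφbdd : BddAbove (Set.range fun x => ‖φ x‖))
    (hhbdd : BddAbove (Set.range fun x => ‖h x‖))
    (heq : ∀ x : Fin n → ℝ,
      -∑ j : Fin n, ((lam j : ℝ) : ℂ) ^ 2 * covD j A (covD j A φ) x + φ x = h x) :
    ∀ x : Fin n → ℝ, ‖φ x‖ ≤ ⨆ y : Fin n → ℝ, ‖h y‖ := by
  -- basic differentiability facts
  have hφd : Differentiable ℝ φ := hφ.differentiable (by norm_num)
  have hconjφ : Differentiable ℝ (fun y => (starRingEnd ℂ) (φ y)) :=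
    Complex.conjCLE.toContinuousLinearMap.differentiable.comp hφd
  have hpdφ : ∀ j, ContDiff ℝ 1 (pd j φ) := contDiff_pd hφ
  have hpdφd : ∀ j, Differentiable ℝ (pd j φ) := fun j => (hpdφ j).differentiable one_ne_zero
  have hAj : ∀ j, ContDiff ℝ 1 (fun y => A y j) := fun j => contDiff_pi.mp hA j
  have hAjd : ∀ j, Differentiable ℝ (fun y => A y j) := fun j => (hAj j).differentiable one_ne_zero
  have hAjC : ∀ j, Differentiable ℝ (fun y => ((A y j : ℝ) : ℂ)) := fun j =>
    Complex.ofRealCLM.differentiable.comp (hAjd j)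
  have hIA : ∀ j, Differentiable ℝ (fun y => Complex.I * ((A y j : ℝ) : ℂ)) := fun j =>
    (hAjC j).const_mul _
  have hIAφ : ∀ j, Differentiable ℝ (fun y => Complex.I * ((A y j : ℝ) : ℂ) * φ y) := fun j =>
    (hIA j).mul hφd
  -- the squared modulus
  set w : (Fin n → ℝ) → ℝ := fun y => Complex.normSq (φ y) with hwdef
  have hwre : w = fun y => ((starRingEnd ℂ) (φ y) * φ y).re := by
    funext y
    rw [hwdef, ← Complex.normSq_eq_conj_mul_self, Complex.ofReal_re]
  have hw : ContDiff ℝ 2 w := by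
    rw [hwre]
    exact Complex.reCLM.contDiff.comp
      ((Complex.conjCLE.toContinuousLinearMap.contDiff.comp hφ).mul hφ)
  have hwd : Differentiable ℝ w := hw.differentiable (by norm_num)
  -- first derivative of w
  have step1 : ∀ j, pd j w = fun x => 2 * ((starRingEnd ℂ) (φ x) * pd j φ x).re := by
    intro j
    funext x
    rw [hwre, pd_re (f := fun y => (starRingEnd ℂ) (φ y) * φ y) ((hconjφ x).mul (hφd x)) j, pd_mul (hconjφ x) (hφd x) j,
      pd_conj (hφd x) j]
    simp only [Complex.add_re, Complex.mul_re, Complex.conj_re, Complex.conj_im]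
    ring
  -- second derivative of w
  have step2 : ∀ j x, pd j (pd j w) x
      = 2 * Complex.normSq (pd j φ x) + 2 * ((starRingEnd ℂ) (φ x) * pd j (pd j φ) x).re := by
    intro j x
    rw [step1 j]
    have hin : DifferentiableAt ℝ (fun y => (starRingEnd ℂ) (φ y) * pd j φ y) x :=
      (hconjφ x).mul (hpdφd j x)
    have hre_in : DifferentiableAt ℝ (fun y => ((starRingEnd ℂ) (φ y) * pd j φ y).re) x :=
      (Complex.reCLM.differentiableAt.comp x hin : _)
    rw [pd_smul_real hre_in 2 j, pd_re hin j, pd_mul (hconjφ x) (hpdφd j x) j,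
      pd_conj (hφd x) j]
    simp only [Complex.add_re, Complex.normSq_apply, Complex.mul_re,
      Complex.conj_re, Complex.conj_im]
    ring
  -- expansion of the double covariant derivative
  have step3 : ∀ j x, covD j A (covD j A φ) x
      = pd j (pd j φ) x - Complex.I * ((pd j (fun y => A y j) x : ℝ) : ℂ) * φ x
        - 2 * Complex.I * ((A x j : ℝ) : ℂ) * pd j φ x - ((A x j : ℝ) : ℂ)^2 * φ x := by
    intro j x
    have hcovfun : covD j A φ = fun y => pd j φ y - Complex.I * ((A y j : ℝ) : ℂ) * φ y := rfl
    have houter : covD j A (covD j A φ) x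
        = pd j (covD j A φ) x - Complex.I * ((A x j : ℝ) : ℂ) * (covD j A φ x) := rfl
    have hpdcov : pd j (covD j A φ) x
        = pd j (pd j φ) x - (Complex.I * ((pd j (fun y => A y j) x : ℝ) : ℂ) * φ x
            + Complex.I * ((A x j : ℝ) : ℂ) * pd j φ x) := by
      rw [hcovfun, pd_sub (hpdφd j x) ((hIAφ j) x) j,
        pd_mul ((hIA j) x) (hφd x) j,
        pd_const_mul ((hAjC j) x) Complex.I j, pd_ofReal ((hAjd j) x) j]
    rw [houter, hpdcov, hcovfun]
    simp only []
    linear_combination (φ x * ((A x j : ℝ):ℂ)^2) * Complex.I_sq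
  -- the key differential inequality
  have step4 : ∀ x, 2 * w x - 2 * ((starRingEnd ℂ) (φ x) * h x).re
      ≤ ∑ j, (lam j)^2 * pd j (pd j w) x := by
    intro x
    have hsum : ∑ j : Fin n, ((lam j : ℝ) : ℂ)^2 * covD j A (covD j A φ) x = φ x - h x := by
      linear_combination -(heq x)
    have h1 : ((starRingEnd ℂ) (φ x) * (φ x - h x)).re
        = w x - ((starRingEnd ℂ) (φ x) * h x).re := by
      rw [mul_sub, Complex.sub_re, ← Complex.normSq_eq_conj_mul_self, Complex.ofReal_re, hwdef]
    have hstep : w x - ((starRingEnd ℂ) (φ x) * h x).re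
        = ∑ j : Fin n, (lam j)^2 * ((starRingEnd ℂ) (φ x) * covD j A (covD j A φ) x).re := by
      rw [← h1, ← hsum, Finset.mul_sum, Complex.re_sum]
      apply Finset.sum_congr rfl
      intro j _
      have : (starRingEnd ℂ) (φ x) * (((lam j : ℝ) : ℂ)^2 * covD j A (covD j A φ) x)
          = (((lam j)^2 : ℝ) : ℂ) * ((starRingEnd ℂ) (φ x) * covD j A (covD j A φ) x) := by
        push_cast
        ring
      rw [this, Complex.re_ofReal_mul]
    have hj : ∀ j : Fin n, (lam j)^2 * ((starRingEnd ℂ) (φ x) * covD j A (covD j A φ) x).re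
        ≤ (lam j)^2 * (pd j (pd j w) x / 2) := by
      intro j
      apply mul_le_mul_of_nonneg_left _ (sq_nonneg _)
      rw [step3 j x, step2 j x]
      have hk := key_alg (φ x) (pd j φ x) (pd j (pd j φ) x) (A x j) (pd j (fun y => A y j) x)
      linarith [hk]
    calc 2 * w x - 2 * ((starRingEnd ℂ) (φ x) * h x).re
        = 2 * (∑ j : Fin n, (lam j)^2 * ((starRingEnd ℂ) (φ x) * covD j A (covD j A φ) x).re) := by
          rw [← hstep]; ring
      _ ≤ 2 * (∑ j : Fin n, (lam j)^2 * (pd j (pd j w) x / 2)) := by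
          apply mul_le_mul_of_nonneg_left (Finset.sum_le_sum fun j _ => hj j) (by norm_num)
      _ = ∑ j : Fin n, (lam j)^2 * pd j (pd j w) x := by
          rw [Finset.mul_sum]
          apply Finset.sum_congr rfl
          intro j _
          ring
  -- setup for the maximum principle
  set H : ℝ := ⨆ y : Fin n → ℝ, ‖h y‖ with hHdef
  set M : ℝ := ⨆ y : Fin n → ℝ, ‖φ y‖ with hMdef
  have hφleM : ∀ y, ‖φ y‖ ≤ M := fun y => le_ciSup hφbdd y
  have hhleH : ∀ y, ‖h y‖ ≤ H := fun y => le_ciSup hhbdd y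
  have hH0 : 0 ≤ H := le_trans (norm_nonneg _) (hhleH (fun _ => 0))
  suffices hMH : M ≤ H by
    intro x; exact le_trans (hφleM x) hMH
  by_contra hMH
  push_neg at hMH
  have hM0 : 0 < M := lt_of_le_of_lt hH0 hMH
  set γ : ℝ := M * (M - H) with hγdef
  have hγ : 0 < γ := mul_pos hM0 (by linarith)
  have hγdef2 : γ = M^2 - M*H := by rw [hγdef]; ring
  set δ : ℝ := γ / 2 with hδdef
  have hδpos : 0 < δ := by rw [hδdef]; positivity
  set Sl : ℝ := ∑ j : Fin n, (lam j)^2 with hSdef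
  have hS0 : 0 ≤ Sl := Finset.sum_nonneg fun j _ => sq_nonneg _
  set ε : ℝ := γ / (4 * (Sl + 1)) with hεdef
  have hεpos : 0 < ε := by rw [hεdef]; positivity
  have hεeq : ε * (4 * (Sl + 1)) = γ := by
    rw [hεdef]; field_simp
  -- choose a near-maximum point x₀
  set δ' : ℝ := (M - H) / 4 with hδ'def
  have hδ'pos : 0 < δ' := by rw [hδ'def]; linarith
  obtain ⟨x₀, hx₀⟩ := exists_lt_of_lt_ciSup
    (show M - δ' < ⨆ y : Fin n → ℝ, ‖φ y‖ by rw [← hMdef]; linarith)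
  have habsnn : 0 ≤ ‖φ x₀‖ := norm_nonneg _
  have hδ'M : 0 ≤ M - δ' := by rw [hδ'def]; linarith
  have hsqabs : (‖φ x₀‖)^2 = w x₀ := Complex.sq_norm _
  have hwx₀ : M^2 - δ < w x₀ := by
    have h1 : (M - δ')^2 < (‖φ x₀‖)^2 := by nlinarith [hx₀, hδ'M, habsnn]
    have h2 : M^2 - δ ≤ (M - δ')^2 := by
      rw [hδ'def, hδdef, hγdef]; nlinarith [sq_nonneg (M - H)]
    linarith [hsqabs ▸ h1]
  -- the auxiliary quadratic
  set q : (Fin n → ℝ) → ℝ := fun y => ∑ k : Fin n, (y k - x₀ k)^2 with hqdef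
  have hprojCD : ∀ k : Fin n, ContDiff ℝ 2 (fun y : Fin n → ℝ => y k) := fun k =>
    contDiff_pi.mp contDiff_id k
  have hq : ContDiff ℝ 2 q := by
    rw [hqdef]
    exact ContDiff.sum fun k _ => ((hprojCD k).sub contDiff_const).pow 2
  have hqd : Differentiable ℝ q := hq.differentiable (by norm_num)
  have hsubd : ∀ k : Fin n, Differentiable ℝ (fun y : Fin n → ℝ => y k - x₀ k) := fun k =>
    ((hprojCD k).differentiable (by norm_num)).sub (differentiable_const _)
  have hsqd : ∀ k : Fin n, Differentiable ℝ (fun y : Fin n → ℝ => (y k - x₀ k)^2) := by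
    intro k
    have : (fun y : Fin n → ℝ => (y k - x₀ k)^2)
        = fun y => (y k - x₀ k) * (y k - x₀ k) := by funext y; ring
    rw [this]
    exact (hsubd k).mul (hsubd k)
  have hpdsub : ∀ (k j : Fin n) (x : Fin n → ℝ),
      pd j (fun y : Fin n → ℝ => y k - x₀ k) x = (Pi.single j (1:ℝ) : Fin n → ℝ) k := by
    intro k j x
    rw [pd_sub (((hprojCD k).differentiable (by norm_num)) x) (differentiableAt_const _) j,
      pd_const, pd_proj k x j, sub_zero]
  have hpdq : ∀ j, pd j q = fun x => 2 * (x j - x₀ j) := by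
    intro j
    funext x
    rw [hqdef, pd_sum Finset.univ (fun k _ => (hsqd k) x) j]
    have hterm : ∀ k : Fin n, pd j (fun y : Fin n → ℝ => (y k - x₀ k)^2) x
        = (Pi.single j (1:ℝ) : Fin n → ℝ) k * (2 * (x k - x₀ k)) := by
      intro k
      have hrw : (fun y : Fin n → ℝ => (y k - x₀ k)^2)
          = fun y => (y k - x₀ k) * (y k - x₀ k) := by funext y; ring
      rw [hrw, pd_mul_real ((hsubd k) x) ((hsubd k) x) j, hpdsub k j x]
      ring
    rw [Finset.sum_congr rfl (fun k _ => hterm k),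
      Finset.sum_eq_single j (fun k _ hk => by rw [Pi.single_eq_of_ne hk]; ring)
        (fun hj => absurd (Finset.mem_univ j) hj),
      Pi.single_eq_same]
    ring
  have hpd2q : ∀ j x, pd j (pd j q) x = 2 := by
    intro j x
    rw [hpdq j]
    have hd : DifferentiableAt ℝ (fun y : Fin n → ℝ => y j - x₀ j) x := (hsubd j) x
    rw [pd_smul_real hd 2 j, hpdsub j j x, Pi.single_eq_same]
    ring
  -- the perturbed function v and its interior maximum
  set v : (Fin n → ℝ) → ℝ := fun y => w y - ε * q y with hvdef
  have hv : ContDiff ℝ 2 v := hw.sub (contDiff_const.mul hq)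
  set R : ℝ := Real.sqrt (δ/ε) + 1 with hRdef
  have hR0 : 0 ≤ R := by rw [hRdef]; positivity
  set K := Metric.closedBall x₀ R with hKdef
  have hK : IsCompact K := isCompact_closedBall x₀ R
  have hx₀K : x₀ ∈ K := Metric.mem_closedBall_self hR0
  obtain ⟨x₁, hx₁K, hx₁max⟩ := hK.exists_isMaxOn ⟨x₀, hx₀K⟩ (hv.continuous.continuousOn)
  have hx₁max' : ∀ y ∈ K, v y ≤ v x₁ := isMaxOn_iff.mp hx₁max
  have hq0 : q x₀ = 0 := by rw [hqdef]; simp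
  have hqnn : ∀ y, 0 ≤ q y := fun y => Finset.sum_nonneg fun k _ => sq_nonneg _
  have hwleM : ∀ y, w y ≤ M^2 := by
    intro y
    have h1 := hφleM y
    have h2 : (‖φ y‖)^2 = w y := Complex.sq_norm _
    nlinarith [norm_nonneg (φ y)]
  have hqlow : ∀ y, y ∉ K → δ/ε < q y := by
    intro y hy
    have hdist : R < dist y x₀ := by
      by_contra hc
      push_neg at hc
      exact hy (Metric.mem_closedBall.mpr hc)
    have hle : dist y x₀ ≤ Real.sqrt (q y) := by
      rw [dist_eq_norm]
      rw [pi_norm_le_iff_of_nonneg (Real.sqrt_nonneg _)]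
      intro k
      have h1 : (y k - x₀ k)^2 ≤ q y :=
        Finset.single_le_sum (fun k _ => sq_nonneg ((y k - x₀ k))) (Finset.mem_univ k)
      have h2 : ‖(y - x₀) k‖ = Real.sqrt ((y k - x₀ k)^2) := by
        rw [Pi.sub_apply, Real.norm_eq_abs, Real.sqrt_sq_eq_abs]
      rw [h2]
      exact Real.sqrt_le_sqrt h1
    have h5 : Real.sqrt (δ/ε) < Real.sqrt (q y) := by
      rw [hRdef] at hdist; linarith
    rw [Real.lt_sqrt (Real.sqrt_nonneg _)] at h5
    rwa [Real.sq_sqrt (by positivity)] at h5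
  have hvglobal : ∀ y, v y ≤ v x₁ := by
    intro y
    by_cases hy : y ∈ K
    · exact hx₁max' y hy
    · have h1 : δ/ε < q y := hqlow y hy
      have h2 : δ < ε * q y := by
        rw [div_lt_iff₀ hεpos] at h1; linarith [h1]
      have h3 : v y < M^2 - δ := by
        show w y - ε * q y < M^2 - δ
        have := hwleM y
        linarith
      have h4 : v x₀ = w x₀ := by
        show w x₀ - ε * q x₀ = w x₀
        rw [hq0]; ring
      have h5 : v y < v x₀ := by rw [h4]; linarith [hwx₀]
      exact le_trans h5.le (hx₁max' x₀ hx₀K)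
  have hlocmax : IsLocalMax v x₁ :=
    (isMaxOn_iff.mpr fun y _ => hvglobal y).isLocalMax Filter.univ_mem
  have hpd2v : ∀ j, pd j (pd j v) x₁ ≤ 0 := fun j => pd2_nonpos_of_localmax hv hlocmax j
  have hpdv : ∀ j, pd j v = fun x => pd j w x - ε * pd j q x := by
    intro j
    funext x
    have e1 : pd j v x = pd j w x - pd j (fun y => ε * q y) x :=
      pd_sub (hwd x) ((hqd x).const_mul ε : DifferentiableAt ℝ (fun y => ε * q y) x) j
    rw [e1, pd_smul_real (hqd x) ε j]
  have hpd2veq : ∀ j, pd j (pd j v) x₁ = pd j (pd j w) x₁ - 2 * ε := by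
    intro j
    rw [hpdv j]
    have hd1 : DifferentiableAt ℝ (pd j w) x₁ := (contDiff_pd hw j).differentiable one_ne_zero x₁
    have hd2 : DifferentiableAt ℝ (fun x => ε * pd j q x) x₁ := by
      rw [hpdq j]
      exact ((((hsubd j).const_mul 2).const_mul ε : Differentiable ℝ _) x₁)
    rw [pd_sub hd1 hd2 j]
    have : pd j (fun x => ε * pd j q x) x₁ = 2 * ε := by
      have hd3 : DifferentiableAt ℝ (pd j q) x₁ := by
        rw [hpdq j]
        exact (((hsubd j).const_mul 2 : Differentiable ℝ _) x₁)
      rw [pd_smul_real hd3 ε j, hpd2q j x₁]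
      ring
    rw [this]
  have hfinal1 : ∑ j : Fin n, (lam j)^2 * pd j (pd j w) x₁ ≤ 2 * ε * Sl := by
    have : ∀ j : Fin n, (lam j)^2 * pd j (pd j w) x₁ ≤ (lam j)^2 * (2 * ε) := by
      intro j
      apply mul_le_mul_of_nonneg_left _ (sq_nonneg _)
      have := hpd2v j
      rw [hpd2veq j] at this
      linarith
    calc ∑ j : Fin n, (lam j)^2 * pd j (pd j w) x₁
        ≤ ∑ j : Fin n, (lam j)^2 * (2 * ε) := Finset.sum_le_sum fun j _ => this j
      _ = 2 * ε * Sl := by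
          rw [hSdef, Finset.mul_sum]
          exact Finset.sum_congr rfl fun j _ => by ring
  have hwx₁ : M^2 - δ < w x₁ := by
    have h1 : v x₁ ≤ w x₁ := by
      show w x₁ - ε * q x₁ ≤ w x₁
      nlinarith [hqnn x₁, hεpos]
    have h2 : v x₀ ≤ v x₁ := hx₁max' x₀ hx₀K
    have h3 : v x₀ = w x₀ := by
      show w x₀ - ε * q x₀ = w x₀
      rw [hq0]; ring
    linarith [hwx₀]
  have hre : ((starRingEnd ℂ) (φ x₁) * h x₁).re ≤ M * H := by
    calc ((starRingEnd ℂ) (φ x₁) * h x₁).re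
        ≤ ‖(starRingEnd ℂ) (φ x₁) * h x₁‖ := Complex.re_le_norm _
      _ = ‖φ x₁‖ * ‖h x₁‖ := by
          rw [norm_mul, Complex.norm_conj]
      _ ≤ M * H := mul_le_mul (hφleM x₁) (hhleH x₁) (norm_nonneg _)
          (le_of_lt hM0)
  have hkey := step4 x₁
  have hγle : γ ≤ 2 * ε * Sl := by
    have : 2 * w x₁ - 2 * ((starRingEnd ℂ) (φ x₁) * h x₁).re ≤ 2 * ε * Sl :=
      le_trans hkey hfinal1
    rw [hδdef] at hwx₁
    linarith [hγdef2, hwx₁, hre]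
  have h2eS : 2 * ε * Sl < γ := by
    nlinarith [hεeq, hεpos, hS0, mul_nonneg hεpos.le hS0]
  linarith

end
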